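/- Let B ⊆ B(G) be a von Neumann algebra, H a complex Hilbert space, ρ' : B' → B(H) a unital *-homomorphism, and C = {x ∈ B(G,H) : ρ'(b') x = x b' for all b' ∈ B'} the intertwiner space. Suppose E ⊆ C is a linear subspace which is closed in the strong operator topology, satisfies x b ∈ E for all x ∈ E and b ∈ B, and is such that the linear span of {x g : x ∈ E, g ∈ G} is dense in H. Then E = C. (In particular, for a given representation ρ' of B' on H there is at most one strongly closed B-submodule E of B(G,H) acting totally on H whose commutant lifting is ρ'.) -/

import Mathlib

/-!
Statement 9: a strongly closed `B`-submodule `E` of the intertwiner space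
`C = C_{B'}(B(G,H))` which acts totally on `H` must be all of `C`.
-/

open scoped InnerProductSpace ComplexOrder
open Filter ContinuousLinearMap

noncomputable section

universe u

section Defs

variable {X Y : Type u}
  [NormedAddCommGroup X] [InnerProductSpace ℂ X] [CompleteSpace X]
  [NormedAddCommGroup Y] [InnerProductSpace ℂ Y] [CompleteSpace Y]

/-- `S` is (complex-)linear on the subset `A`. -/
def LinearOn (A : Set (X →L[ℂ] X)) (S : (X →L[ℂ] X) → (Y →L[ℂ] Y)) : Prop :=
  (∀ a₁ ∈ A, ∀ a₂ ∈ A, S (a₁ + a₂) = S a₁ + S a₂) ∧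
    ∀ (c : ℂ), ∀ a ∈ A, S (c • a) = c • S a

/-- `S` is completely positive on `A`: for all `n`, `x : Fin n → A` and vectors
`v : Fin n → Y` the matrix-positivity expression `∑ ⟪v i, S (x i ∗ x j) (v j)⟫ ≥ 0` holds.
(This is the standard equivalent form of positivity of the entrywise applied maps on
`n × n` operator matrices.) -/
def CompletelyPositiveOn (A : Set (X →L[ℂ] X)) (S : (X →L[ℂ] X) → (Y →L[ℂ] Y)) : Prop :=
  ∀ (n : ℕ) (x : Fin n → (X →L[ℂ] X)), (∀ i, x i ∈ A) → ∀ v : Fin n → Y,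
    0 ≤ ∑ i, ∑ j, ⟪v i, (S (star (x i) * x j)) (v j)⟫_ℂ

/-- `S` is normal on `A`: the restriction of `S` to the closed unit ball of `A` is
continuous with respect to the weak operator topologies (net/filter formulation). -/
def NormalOn (A : Set (X →L[ℂ] X)) (S : (X →L[ℂ] X) → (Y →L[ℂ] Y)) : Prop :=
  ∀ (l : Filter (X →L[ℂ] X)), ∀ a ∈ A,
    (∀ᶠ x in l, x ∈ A ∧ ‖x‖ ≤ 1) →
    (∀ x₁ x₂ : X, Tendsto (fun y => ⟪x₁, y x₂⟫_ℂ) l (nhds ⟪x₁, a x₂⟫_ℂ)) →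
    ∀ y₁ y₂ : Y, Tendsto (fun y => ⟪y₁, (S y) y₂⟫_ℂ) l (nhds ⟪y₁, (S a) y₂⟫_ℂ)

/-- `j` is a ∗-homomorphism on `A`. -/
def StarHomOn (A : Set (X →L[ℂ] X)) (j : (X →L[ℂ] X) → (Y →L[ℂ] Y)) : Prop :=
  LinearOn A j ∧ (∀ a₁ ∈ A, ∀ a₂ ∈ A, j (a₁ * a₂) = j a₁ * j a₂) ∧
    ∀ a ∈ A, j (star a) = star (j a)

end Defs


/-- A set of operators is closed in the strong operator topology
(net/filter formulation of closedness). -/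
def SOTClosed {X Y : Type u}
    [NormedAddCommGroup X] [InnerProductSpace ℂ X] [CompleteSpace X]
    [NormedAddCommGroup Y] [InnerProductSpace ℂ Y] [CompleteSpace Y]
    (E : Set (X →L[ℂ] Y)) : Prop :=
  ∀ (l : Filter (X →L[ℂ] Y)) (x : X →L[ℂ] Y), l.NeBot → (∀ᶠ y in l, y ∈ E) →
    (∀ v : X, Tendsto (fun y : X →L[ℂ] Y => y v) l (nhds (x v))) → x ∈ E

open scoped Pointwise
set_option linter.unusedSectionVars false
set_option maxHeartbeats 1000000
set_option synthInstance.maxHeartbeats 1000000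

section Aux

variable {X : Type u} [NormedAddCommGroup X] [InnerProductSpace ℂ X] [CompleteSpace X]

/-- Core approximation lemma: a nondegenerate ∗-subalgebra (given as a submodule closed
under multiplication and adjoints) approximates the identity on any single vector. -/
lemma core_approx (A : Submodule ℂ (X →L[ℂ] X))
    (hmul : ∀ a ∈ A, ∀ b ∈ A, a ∘L b ∈ A)
    (hstar : ∀ a ∈ A, ContinuousLinearMap.adjoint a ∈ A)
    (hnd : ∀ k : X, (∀ a ∈ A, a k = 0) → k = 0)
    (h : X) : h ∈ closure {v : X | ∃ a ∈ A, a h = v} := by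
  classical
  -- the subspace A·h
  let M : Submodule ℂ X :=
    { carrier := {v : X | ∃ a ∈ A, a h = v}
      add_mem' := by rintro v w ⟨a, ha, rfl⟩ ⟨b, hb, rfl⟩; exact ⟨a + b, A.add_mem ha hb, rfl⟩
      zero_mem' := ⟨0, A.zero_mem, rfl⟩
      smul_mem' := by rintro c v ⟨a, ha, rfl⟩; exact ⟨c • a, A.smul_mem c ha, rfl⟩ }
  let K : Submodule ℂ X := M.topologicalClosure
  have hMK : (M : Set X) ⊆ (K : Set X) := M.le_topologicalClosure
  have hKclosure : (K : Set X) = closure (M : Set X) := rfl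
  let q : X →L[ℂ] X := K.subtypeL ∘L K.orthogonalProjectionOnto
  have hq_mem : ∀ v : X, q v ∈ K := fun v => (K.orthogonalProjectionOnto v).2
  have hq_fix : ∀ v ∈ K, q v = v := by
    intro v hv
    exact K.starProjection_eq_self_iff.mpr hv
  have hq_sa : ContinuousLinearMap.adjoint q = q :=
    (isSelfAdjoint_starProjection K).adjoint_eq
  -- invariance of K under A
  have hMinv : ∀ a ∈ A, ∀ v ∈ M, a v ∈ M := by
    rintro a ha v ⟨b, hb, rfl⟩
    exact ⟨a ∘L b, hmul a ha b hb, rfl⟩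
  have hKinv : ∀ a ∈ A, ∀ v ∈ K, a v ∈ K := by
    intro a ha v hv
    have h1 : a '' closure (M : Set X) ⊆ closure (a '' (M : Set X)) :=
      image_closure_subset_closure_image a.continuous
    have h2 : a '' (M : Set X) ⊆ (M : Set X) := by
      rintro _ ⟨w, hw, rfl⟩; exact hMinv a ha w hw
    have h3 : a v ∈ closure (⇑a '' (M : Set X)) := h1 ⟨v, hv, rfl⟩
    have h4 : closure (⇑a '' (M : Set X)) ⊆ closure (M : Set X) := closure_mono h2
    exact h4 h3
  -- q commutes with every element of A
  have hqaq : ∀ a ∈ A, q ∘L a ∘L q = a ∘L q := by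
    intro a ha
    ext v
    exact hq_fix _ (hKinv a ha _ (hq_mem v))
  have hcomm : ∀ a ∈ A, a ∘L q = q ∘L a := by
    intro a ha
    have h1 : q ∘L (ContinuousLinearMap.adjoint a) ∘L q = (ContinuousLinearMap.adjoint a) ∘L q :=
      hqaq _ (hstar a ha)
    have h2 := congrArg ContinuousLinearMap.adjoint h1
    simp only [ContinuousLinearMap.adjoint_comp, ContinuousLinearMap.adjoint_adjoint,
      hq_sa] at h2
    have h3 := hqaq a ha
    ext v
    have e2 := congrArg (fun T : X →L[ℂ] X => T v) h2
    have e3 := congrArg (fun T : X →L[ℂ] X => T v) h3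
    simp only [ContinuousLinearMap.comp_apply] at e2 e3 ⊢
    rw [← e3]
    rw [← e2]
  -- the defect vector is killed by A
  have hk : ∀ a ∈ A, a (h - q h) = 0 := by
    intro a ha
    have h1 : a (q h) = q (a h) := by
      have := congrArg (fun T : X →L[ℂ] X => T h) (hcomm a ha)
      simpa using this
    have h2 : a h ∈ K := hMK ⟨a, ha, rfl⟩
    simp only [map_sub, h1, hq_fix _ h2, sub_self]
  have hzero : h - q h = 0 := hnd _ hk
  have : h ∈ K := by
    have : h = q h := by rwa [sub_eq_zero] at hzero
    rw [this]; exact hq_mem h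
  exact this

end Aux

section Diag

variable {H' : Type u} [NormedAddCommGroup H'] [InnerProductSpace ℂ H'] [CompleteSpace H']

/-- The diagonal amplification of an operator to a finite `ℓ²`-power of the space. -/
def diagCLM (ι : Type u) [Fintype ι] (a : H' →L[ℂ] H') :
    PiLp 2 (fun _ : ι => H') →L[ℂ] PiLp 2 (fun _ : ι => H') :=
  (PiLp.continuousLinearEquiv 2 ℂ (fun _ : ι => H')).symm.toContinuousLinearMap ∘L
    ((ContinuousLinearMap.pi fun i : ι => a ∘L ContinuousLinearMap.proj i) ∘L
      (PiLp.continuousLinearEquiv 2 ℂ (fun _ : ι => H')).toContinuousLinearMap)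

variable {ι : Type u} [Fintype ι]

instance : CompleteSpace (PiLp 2 (fun _ : ι => H')) :=
  inferInstance

@[simp] lemma diagCLM_apply (a : H' →L[ℂ] H') (v : PiLp 2 (fun _ : ι => H')) (i : ι) :
    diagCLM ι a v i = a (v i) := rfl

lemma diagCLM_comp (a b : H' →L[ℂ] H') :
    diagCLM ι (a ∘L b) = diagCLM ι a ∘L diagCLM ι b := by
  ext v i
  rfl

lemma diagCLM_zero : diagCLM ι (0 : H' →L[ℂ] H') = 0 := by
  ext v i
  rfl

lemma diagCLM_add (a b : H' →L[ℂ] H') :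
    diagCLM ι (a + b) = diagCLM ι a + diagCLM ι b := by
  ext v i
  rfl

lemma diagCLM_smul (c : ℂ) (a : H' →L[ℂ] H') :
    diagCLM ι (c • a) = c • diagCLM ι a := by
  ext v i
  rfl

lemma diagCLM_adjoint (a : H' →L[ℂ] H') :
    ContinuousLinearMap.adjoint (diagCLM ι a) = diagCLM ι (ContinuousLinearMap.adjoint a) := by
  symm
  rw [ContinuousLinearMap.eq_adjoint_iff]
  intro v w
  simp only [PiLp.inner_apply, diagCLM_apply, ContinuousLinearMap.adjoint_inner_left]

end Diag

/-- **Uniqueness of the submodule inducing a given commutant lifting.**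
Let `B ⊆ B(G)` be a von Neumann algebra, `ρ' : B' → B(H)` a unital ∗-homomorphism, and
`C = {x ∈ B(G,H) : ρ'(b') x = x b' for all b' ∈ B'}` the intertwiner space.  If `E ⊆ C`
is a strongly closed subspace with `E·B ⊆ E` whose range `{x g}` is total in `H`,
then `E = C`. -/
theorem submodule_of_intertwiner_space_eq
    {G H : Type u}
    [NormedAddCommGroup G] [InnerProductSpace ℂ G] [CompleteSpace G]
    [NormedAddCommGroup H] [InnerProductSpace ℂ H] [CompleteSpace H]
    (B : VonNeumannAlgebra G)
    (ρ' : (G →L[ℂ] G) → (H →L[ℂ] H))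
    (hρ'hom : StarHomOn ((B.commutant : VonNeumannAlgebra G) : Set (G →L[ℂ] G)) ρ')
    (hρ'unital : ρ' 1 = 1)
    (E : Set (G →L[ℂ] H))
    (hEsub : E ⊆ {x : G →L[ℂ] H | ∀ b' ∈ B.commutant, (ρ' b') ∘L x = x ∘L b'})
    (hzero : (0 : G →L[ℂ] H) ∈ E)
    (hadd : ∀ x ∈ E, ∀ y ∈ E, x + y ∈ E)
    (hsmul : ∀ (c : ℂ), ∀ x ∈ E, c • x ∈ E)
    (hclosed : SOTClosed E)
    (hmod : ∀ x ∈ E, ∀ b ∈ B, x ∘L b ∈ E)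
    (htotal : Dense ((Submodule.span ℂ {h : H | ∃ x ∈ E, ∃ g : G, x g = h} :
      Submodule ℂ H) : Set H)) :
    E = {x : G →L[ℂ] H | ∀ b' ∈ B.commutant, (ρ' b') ∘L x = x ∘L b'} := by
  classical
  apply Set.Subset.antisymm hEsub
  intro x hx
  simp only [Set.mem_setOf_eq] at hx
  -- Step 1: for `z ∈ E` and any intertwiner `w`, `z† ∘ w ∈ B`.
  have hB : ∀ z ∈ E, ∀ w : G →L[ℂ] H,
      (∀ b' ∈ B.commutant, (ρ' b') ∘L w = w ∘L b') →
      (ContinuousLinearMap.adjoint z) ∘L w ∈ B := by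
    intro z hz w hw
    have hzC := hEsub hz
    simp only [Set.mem_setOf_eq] at hzC
    rw [← B.commutant_commutant, VonNeumannAlgebra.mem_commutant_iff]
    intro b' hb'
    have hb's : star b' ∈ B.commutant := star_mem hb'
    have h1 : (ρ' (star b')) ∘L z = z ∘L star b' := hzC (star b') hb's
    have hst : ρ' (star b') = star (ρ' b') := hρ'hom.2.2 b' (SetLike.mem_coe.mpr hb')
    have h2 : ContinuousLinearMap.adjoint z ∘L (ρ' b') =
        b' ∘L ContinuousLinearMap.adjoint z := by
      have h3 := congrArg ContinuousLinearMap.adjoint h1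
      simp only [ContinuousLinearMap.adjoint_comp] at h3
      rw [hst] at h3
      simp only [ContinuousLinearMap.star_eq_adjoint,
        ContinuousLinearMap.adjoint_adjoint] at h3
      exact h3
    rw [ContinuousLinearMap.mul_def, ContinuousLinearMap.mul_def]
    calc b' ∘L (ContinuousLinearMap.adjoint z ∘L w)
        = (b' ∘L ContinuousLinearMap.adjoint z) ∘L w :=
          (ContinuousLinearMap.comp_assoc _ _ _).symm
      _ = (ContinuousLinearMap.adjoint z ∘L ρ' b') ∘L w := by rw [h2]
      _ = ContinuousLinearMap.adjoint z ∘L (ρ' b' ∘L w) :=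
          ContinuousLinearMap.comp_assoc _ _ _
      _ = ContinuousLinearMap.adjoint z ∘L (w ∘L b') := by rw [hw b' hb']
      _ = (ContinuousLinearMap.adjoint z ∘L w) ∘L b' :=
          (ContinuousLinearMap.comp_assoc _ _ _).symm
  -- The ∗-algebra `A₀ = span {y z† : y, z ∈ E}` in `B(H)`.
  set s : Set (H →L[ℂ] H) :=
    {a | ∃ y ∈ E, ∃ z ∈ E, a = y ∘L ContinuousLinearMap.adjoint z} with hs
  set A : Submodule ℂ (H →L[ℂ] H) := Submodule.span ℂ s with hA
  -- Step 2: `A` acts on intertwiners, landing in `E`.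
  have hAact : ∀ w : G →L[ℂ] H, (∀ b' ∈ B.commutant, (ρ' b') ∘L w = w ∘L b') →
      ∀ a ∈ A, a ∘L w ∈ E := by
    intro w hw a ha
    induction ha using Submodule.span_induction with
    | mem a' ha' =>
      obtain ⟨y, hy, z, hz, rfl⟩ := ha'
      rw [ContinuousLinearMap.comp_assoc]
      exact hmod y hy _ (hB z hz w hw)
    | zero => simpa using hzero
    | add u v hu hv ihu ihv => rw [ContinuousLinearMap.add_comp]; exact hadd _ ihu _ ihv
    | smul c u hu ihu => rw [ContinuousLinearMap.smul_comp]; exact hsmul c _ ihu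
  -- Step 3: `A` is closed under multiplication.
  have hss : s * s ⊆ s := by
    rintro _ ⟨a₁, ha₁, a₂, ha₂, rfl⟩
    obtain ⟨y, hy, z, hz, rfl⟩ := ha₁
    obtain ⟨u, hu, v, hv, rfl⟩ := ha₂
    have huC := hEsub hu
    simp only [Set.mem_setOf_eq] at huC
    refine ⟨y ∘L ((ContinuousLinearMap.adjoint z) ∘L u),
      hmod y hy _ (hB z hz u huC), v, hv, ?_⟩
    show (y ∘L ContinuousLinearMap.adjoint z) * (u ∘L ContinuousLinearMap.adjoint v) =
      (y ∘L ((ContinuousLinearMap.adjoint z) ∘L u)) ∘L ContinuousLinearMap.adjoint v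
    rw [ContinuousLinearMap.mul_def]
    ext g
    rfl
  have hAmul : ∀ a ∈ A, ∀ b ∈ A, a ∘L b ∈ A := by
    intro a ha b hb
    have h1 : a * b ∈ A * A := Submodule.mul_mem_mul ha hb
    rw [hA, Submodule.span_mul_span] at h1
    exact (Submodule.span_mono hss) h1
  -- Step 4: `A` is closed under adjoints.
  have hAstar : ∀ a ∈ A, ContinuousLinearMap.adjoint a ∈ A := by
    intro a ha
    induction ha using Submodule.span_induction with
    | mem a' ha' =>
      obtain ⟨y, hy, z, hz, rfl⟩ := ha'
      rw [ContinuousLinearMap.adjoint_comp, ContinuousLinearMap.adjoint_adjoint]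
      exact Submodule.subset_span ⟨z, hz, y, hy, rfl⟩
    | zero =>
      rw [show ContinuousLinearMap.adjoint (0 : H →L[ℂ] H) = 0 from map_zero _]
      exact A.zero_mem
    | add u v hu hv ihu ihv => rw [map_add]; exact A.add_mem ihu ihv
    | smul c u hu ihu =>
      have hcs : ContinuousLinearMap.adjoint (c • u) =
          star c • ContinuousLinearMap.adjoint u := by
        rw [← ContinuousLinearMap.star_eq_adjoint, ← ContinuousLinearMap.star_eq_adjoint,
          star_smul]
      rw [hcs]
      exact A.smul_mem _ ihu
  -- Step 5: nondegeneracy of `A`.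
  have hknd : ∀ k : H, (∀ a ∈ A, a k = 0) → k = 0 := by
    intro k hk
    have hzk : ∀ z ∈ E, ContinuousLinearMap.adjoint z k = 0 := by
      intro z hzE
      have h0 : (z ∘L ContinuousLinearMap.adjoint z) k = 0 :=
        hk _ (Submodule.subset_span ⟨z, hzE, z, hzE, rfl⟩)
      have h1 : ⟪ContinuousLinearMap.adjoint z k, ContinuousLinearMap.adjoint z k⟫_ℂ = 0 := by
        calc ⟪ContinuousLinearMap.adjoint z k, ContinuousLinearMap.adjoint z k⟫_ℂ
            = ⟪k, z (ContinuousLinearMap.adjoint z k)⟫_ℂ :=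
              ContinuousLinearMap.adjoint_inner_left z (ContinuousLinearMap.adjoint z k) k
          _ = ⟪k, (0 : H)⟫_ℂ := by rw [← ContinuousLinearMap.comp_apply, h0]
          _ = 0 := inner_zero_right k
      exact inner_self_eq_zero.mp h1
    have horth : ∀ v ∈ Submodule.span ℂ {h : H | ∃ x ∈ E, ∃ g : G, x g = h},
        ⟪v, k⟫_ℂ = 0 := by
      intro v hv
      induction hv using Submodule.span_induction with
      | mem v' hv' =>
        obtain ⟨z, hzE, g, rfl⟩ := hv'
        rw [← ContinuousLinearMap.adjoint_inner_right, hzk z hzE, inner_zero_right]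
      | zero => exact inner_zero_left k
      | add u v hu hv ihu ihv => rw [inner_add_left, ihu, ihv, add_zero]
      | smul c u hu ihu => rw [inner_smul_left, ihu, mul_zero]
    have hcont : Continuous fun v : H => ⟪v, k⟫_ℂ := continuous_id.inner continuous_const
    have heq : Set.EqOn (fun v : H => ⟪v, k⟫_ℂ) (fun _ => (0 : ℂ))
        ((Submodule.span ℂ {h : H | ∃ x ∈ E, ∃ g : G, x g = h} : Submodule ℂ H) : Set H) :=
      fun v hv => horth v hv
    have heqc := heq.closure hcont continuous_const
    have hkc : k ∈ closure
        ((Submodule.span ℂ {h : H | ∃ x ∈ E, ∃ g : G, x g = h} : Submodule ℂ H) : Set H) := by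
      rw [htotal.closure_eq]; trivial
    exact inner_self_eq_zero.mp (heqc hkc)
  -- Step 6: simultaneous approximation on finite sets of vectors.
  have happrox : ∀ (sf : Finset G), ∀ ε : ℝ, 0 < ε →
      ∃ e ∈ E, ∀ g ∈ sf, ‖e g - x g‖ < ε := by
    intro sf ε hε
    let ι := {g : G // g ∈ sf}
    let Ah : Submodule ℂ (PiLp 2 (fun _ : ι => H) →L[ℂ] PiLp 2 (fun _ : ι => H)) :=
      { carrier := {b | ∃ a ∈ A, diagCLM ι a = b}
        add_mem' := by
          rintro b c ⟨a, ha, rfl⟩ ⟨a', ha', rfl⟩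
          exact ⟨a + a', A.add_mem ha ha', diagCLM_add a a'⟩
        zero_mem' := ⟨0, A.zero_mem, diagCLM_zero⟩
        smul_mem' := by
          rintro c b ⟨a, ha, rfl⟩
          exact ⟨c • a, A.smul_mem c ha, diagCLM_smul c a⟩ }
    have hAhmul : ∀ b ∈ Ah, ∀ b' ∈ Ah, b ∘L b' ∈ Ah := by
      rintro _ ⟨a, ha, rfl⟩ _ ⟨a', ha', rfl⟩
      exact ⟨a ∘L a', hAmul a ha a' ha', diagCLM_comp a a'⟩
    have hAhstar : ∀ b ∈ Ah, ContinuousLinearMap.adjoint b ∈ Ah := by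
      rintro _ ⟨a, ha, rfl⟩
      exact ⟨ContinuousLinearMap.adjoint a, hAstar a ha, (diagCLM_adjoint a).symm⟩
    have hAhnd : ∀ k : PiLp 2 (fun _ : ι => H), (∀ b ∈ Ah, b k = 0) → k = 0 := by
      intro k hk
      have hki : ∀ i : ι, k i = 0 := by
        intro i
        apply hknd
        intro a ha
        have h0 := hk (diagCLM ι a) ⟨a, ha, rfl⟩
        calc a (k i) = (diagCLM ι a) k i := rfl
          _ = (0 : PiLp 2 (fun _ : ι => H)) i := by rw [h0]
          _ = 0 := rfl
      rw [WithLp.ext_iff]; funext i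
      exact hki i
    let hh : PiLp 2 (fun _ : ι => H) := WithLp.toLp 2 (fun i => x i.1)
    have hcore := core_approx Ah hAhmul hAhstar hAhnd hh
    rw [Metric.mem_closure_iff] at hcore
    obtain ⟨v, hv, hdist⟩ := hcore ε hε
    obtain ⟨b, hb, rfl⟩ := hv
    obtain ⟨a, ha, rfl⟩ := hb
    refine ⟨a ∘L x, hAact x hx a ha, ?_⟩
    intro g hg
    have hcomp_le : ∀ (w : PiLp 2 (fun _ : ι => H)) (i : ι), ‖w i‖ ≤ ‖w‖ := by
      intro w i
      have h1 : ‖w i‖ ^ 2 ≤ ∑ j, ‖w j‖ ^ 2 :=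
        Finset.single_le_sum (f := fun j => ‖w j‖ ^ 2)
          (fun j _ => sq_nonneg _) (Finset.mem_univ i)
      have h2 : ‖w‖ ^ 2 = ∑ j, ‖w j‖ ^ 2 := PiLp.norm_sq_eq_of_L2 _ w
      nlinarith [norm_nonneg (w i), norm_nonneg w]
    have e1 : (a ∘L x) g - x g = (diagCLM ι a hh - hh) ⟨g, hg⟩ := rfl
    rw [e1]
    calc ‖(diagCLM ι a hh - hh) ⟨g, hg⟩‖ ≤ ‖diagCLM ι a hh - hh‖ := hcomp_le _ _
      _ = dist (diagCLM ι a hh) hh := (dist_eq_norm _ _).symm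
      _ = dist hh (diagCLM ι a hh) := dist_comm _ _
      _ < ε := hdist
  -- Step 7: conclude via strong closedness.
  let idx := Finset G × {ε : ℝ // 0 < ε}
  let Es : idx → Set (G →L[ℂ] H) := fun p => {e | e ∈ E ∧ ∀ g ∈ p.1, ‖e g - x g‖ < p.2.1}
  let l : Filter (G →L[ℂ] H) := ⨅ p : idx, Filter.principal (Es p)
  have hdir : Directed (· ≥ ·) fun p : idx => Filter.principal (Es p) := by
    intro p q
    refine ⟨(p.1 ∪ q.1, ⟨min p.2.1 q.2.1, lt_min p.2.2 q.2.2⟩), ?_, ?_⟩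
    · exact Filter.principal_mono.mpr (fun e he => ⟨he.1, fun g hg =>
        lt_of_lt_of_le (he.2 g (Finset.mem_union_left _ hg)) (min_le_left _ _)⟩)
    · exact Filter.principal_mono.mpr (fun e he => ⟨he.1, fun g hg =>
        lt_of_lt_of_le (he.2 g (Finset.mem_union_right _ hg)) (min_le_right _ _)⟩)
  have hl : l.NeBot := by
    refine Filter.iInf_neBot_of_directed hdir ?_
    intro p
    obtain ⟨e, he, hee⟩ := happrox p.1 p.2.1 p.2.2
    exact Filter.principal_neBot_iff.mpr ⟨e, he, hee⟩
  have hev : ∀ᶠ y in l, y ∈ E := by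
    have hone : Es (∅, ⟨1, one_pos⟩) ∈ l :=
      Filter.mem_iInf_of_mem _ (Filter.mem_principal_self _)
    exact Filter.mem_of_superset hone (fun e he => he.1)
  have htd : ∀ v : G, Tendsto (fun y : G →L[ℂ] H => y v) l (nhds (x v)) := by
    intro v
    rw [Metric.tendsto_nhds]
    intro δ hδ
    have hm : Es ({v}, ⟨δ, hδ⟩) ∈ l :=
      Filter.mem_iInf_of_mem _ (Filter.mem_principal_self _)
    refine Filter.mem_of_superset hm ?_
    intro e he
    have h2 := he.2 v (Finset.mem_singleton_self v)
    simpa [dist_eq_norm] using h2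
  exact hclosed l x hl hev htd
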